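/- Let a ∈ [0,1), b ∈ (0,1] with a < b. For every x in the set P_{(a,b)} = (0,1) \ ({a} if a>0, ∪ {b} if b<1), one has the convergent expansion 𝟙(a < x < b) = Σ_{j=0}^∞ c_j(x)·g_j(a,b). -/

import Mathlib

open Filter Finset Complex


/-- `cfun j x`: c₀(x)=1, c_{2j-1}(x)=cos((2j-1)x), c_{2j}(x)=sin((2j-1)x). -/
noncomputable def cfun (j : ℕ) (x : ℝ) : ℝ :=
  if j = 0 then 1
  else if j % 2 = 1 then Real.cos ((j : ℝ) * x)
  else Real.sin (((j : ℝ) - 1) * x)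

/-- `gfun j a b`: the coefficients g_j(a,b). -/
noncomputable def gfun (j : ℕ) (a b : ℝ) : ℝ :=
  if j = 0 then
    1 - (1 / 2) * ((if 0 < a then (1 : ℝ) else 0) + (if b < 1 then (1 : ℝ) else 0))
  else if j % 2 = 1 then
    (2 / (Real.pi * (j : ℝ))) *
      ((if b < 1 then (1 : ℝ) else 0) * Real.sin ((j : ℝ) * b) -
        (if 0 < a then (1 : ℝ) else 0) * Real.sin ((j : ℝ) * a))
  else
    (2 / (Real.pi * ((j : ℝ) - 1))) *
      ((if 0 < a then (1 : ℝ) else 0) * Real.cos (((j : ℝ) - 1) * a) -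
        (if b < 1 then (1 : ℝ) else 0) * Real.cos (((j : ℝ) - 1) * b))

/-- Indicator of the open interval (a,b). -/
noncomputable def indIoo (a b x : ℝ) : ℝ := if a < x ∧ x < b then 1 else 0

/-- The Jth partial sum 1_J(x,a,b) = Σ_{j=0}^{2J} c_j(x)·g_j(a,b). -/
noncomputable def oneJ (J : ℕ) (x a b : ℝ) : ℝ :=
  ∑ j ∈ Finset.range (2 * J + 1), cfun j x * gfun j a b


noncomputable def Phi (z : ℂ) : ℂ := -(1/2 : ℂ) * Complex.log ((1 - z)/(1 + z))

lemma hasSum_oddSeries {z : ℂ} (hz : ‖z‖ < 1) :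
    HasSum (fun k : ℕ => z ^ (2*k+1) / ((2*k+1 : ℕ) : ℂ)) (Phi z) := by
  have h := Complex.hasSum_arctan (z := Complex.I * z) (by simpa using hz)
  have h2 := h.mul_left (-Complex.I)
  have hfun : (fun n : ℕ => -Complex.I * ((-1)^n * (Complex.I * z) ^ (2*n+1) / ((2*n+1 : ℕ) : ℂ)))
      = fun n : ℕ => z ^ (2*n+1) / ((2*n+1 : ℕ) : ℂ) := by
    funext n
    have h3 : (Complex.I * z) ^ (2*n+1) = (-1)^n * Complex.I * z^(2*n+1) := by
      rw [mul_pow, pow_succ, pow_mul, Complex.I_sq]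
    have h4 : ((-1:ℂ))^n * ((-1:ℂ))^n = 1 := by
      rw [← pow_add, ← two_mul, pow_mul]; norm_num
    rw [h3, show -Complex.I * ((-1)^n * ((-1)^n * Complex.I * z^(2*n+1)) / ((2*n+1 : ℕ) : ℂ))
      = ((-1:ℂ)^n*(-1:ℂ)^n) * (-(Complex.I*Complex.I)) * z^(2*n+1) / ((2*n+1 : ℕ) : ℂ) from by
        ring, h4, Complex.I_mul_I]
    ring
  rw [hfun] at h2
  have hval : -Complex.I * Complex.arctan (Complex.I * z) = Phi z := by
    rw [Complex.arctan, Phi]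
    have e1 : 1 + Complex.I * z * Complex.I = 1 - z := by
      rw [mul_assoc, mul_comm z, ← mul_assoc, Complex.I_mul_I]; ring
    have e2 : 1 - Complex.I * z * Complex.I = 1 + z := by
      rw [mul_assoc, mul_comm z, ← mul_assoc, Complex.I_mul_I]; ring
    rw [e1, e2, show -Complex.I * (-Complex.I/2 * Complex.log ((1-z)/(1+z)))
      = (Complex.I * Complex.I)/2 * Complex.log ((1-z)/(1+z)) by ring, Complex.I_mul_I]
    ring
  rwa [hval] at h2

open scoped Real in
lemma tendsto_sinSeries {t : ℝ} (h0 : 0 < t) (hπ : t < Real.pi) :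
    Tendsto (fun N : ℕ => ∑ k ∈ range N, Real.sin ((2*(k:ℝ)+1)*t)/(2*(k:ℝ)+1))
      atTop (nhds (Real.pi/4)) := by
  set w : ℂ := Complex.exp (t * Complex.I) with hw
  have hnw : ‖w‖ = 1 := Complex.norm_exp_ofReal_mul_I t
  -- w^2 ≠ 1
  have hw2 : w^2 ≠ 1 := by
    intro hh
    rw [hw, ← Complex.exp_nat_mul, Complex.exp_eq_one_iff] at hh
    obtain ⟨n, hn⟩ := hh
    have him := congrArg Complex.im hn
    simp [Complex.mul_im] at him
    have hp := Real.pi_pos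
    have hn0 : (0:ℤ) < n := by exact_mod_cast show (0:ℝ) < n by nlinarith
    have hn1 : n < 1 := by exact_mod_cast show (n:ℝ) < 1 by nlinarith
    omega
  -- bounded partial sums of w^(2i+1)
  have hb : ∀ n : ℕ, ‖∑ i ∈ range n, w^(2*i+1)‖ ≤ 2 / ‖w^2 - 1‖ := by
    intro n
    have : ∑ i ∈ range n, w^(2*i+1) = w * (((w^2)^n - 1)/(w^2 - 1)) := by
      rw [← geom_sum_eq hw2]
      rw [Finset.mul_sum]
      congr 1; funext i
      rw [← pow_mul, pow_add, pow_one]; ring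
    rw [this, norm_mul, hnw, one_mul, norm_div]
    gcongr
    calc ‖(w^2)^n - 1‖ ≤ ‖(w^2)^n‖ + ‖(1:ℂ)‖ := norm_sub_le _ _
      _ ≤ 2 := by rw [norm_pow, norm_pow, hnw]; norm_num
  -- Dirichlet test
  set c : ℕ → ℝ := fun k => ((2*k+1 : ℕ) : ℝ)⁻¹ with hcdef
  have hca : Antitone c := by
    intro m n h
    dsimp [c]
    have h1 : (0:ℝ) < ((2*m+1 : ℕ):ℝ) := by positivity
    have h2 : ((2*m+1 : ℕ):ℝ) ≤ ((2*n+1:ℕ):ℝ) := by exact_mod_cast by omega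
    gcongr
  have hc0 : Tendsto c atTop (nhds 0) := by
    rw [hcdef]
    exact tendsto_inv_atTop_zero.comp (tendsto_natCast_atTop_atTop.comp
      (tendsto_atTop_mono (fun n : ℕ => by omega : ∀ n : ℕ, n ≤ 2*n+1) tendsto_id))
  have hC : CauchySeq (fun n => ∑ i ∈ range n, c i • w^(2*i+1)) :=
    hca.cauchySeq_series_mul_of_tendsto_zero_of_bounded hc0 hb
  obtain ⟨l, hl⟩ := cauchySeq_tendsto_of_complete hC
  set F : ℕ → ℂ := fun k => c k • w^(2*k+1) with hFdef
  have hA := Complex.tendsto_tsum_powerSeries_nhdsWithin_lt (f := F) hl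
  rw [tendsto_map'_iff] at hA
  -- facts about w
  have hwre : w = (Real.cos t : ℂ) + (Real.sin t : ℂ) * Complex.I := by
    rw [hw, Complex.exp_mul_I, Complex.ofReal_cos, Complex.ofReal_sin]
  have hsin : 0 < Real.sin t := Real.sin_pos_of_pos_of_lt_pi h0 hπ
  have hcos : -1 < Real.cos t := by
    nlinarith [Real.sin_sq_add_cos_sq t, Real.neg_one_le_cos t, mul_pos hsin hsin]
  have hden : (1 : ℂ) + w ≠ 0 := by
    rw [hwre]; intro hh
    have := congrArg Complex.re hh
    simp [Complex.cos_ofReal_re] at this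
    linarith
  set r : ℝ := Real.sin t / (1 + Real.cos t) with hrdef
  have hr : 0 < r := div_pos hsin (by linarith)
  have hu : ((1:ℂ) - w)/(1 + w) = ((r:ℝ) : ℂ) * (-Complex.I) := by
    have hc1 : (0:ℝ) < 1 + Real.cos t := by linarith
    rw [div_eq_iff hden, hwre, hrdef]
    rw [Complex.ext_iff]
    constructor
    · simp only [Complex.sub_re, Complex.one_re, Complex.add_re, Complex.mul_re,
        Complex.ofReal_re, Complex.ofReal_im, Complex.I_re, Complex.I_im, Complex.neg_re,
        Complex.neg_im, Complex.mul_im, Complex.add_im, Complex.sub_im, Complex.one_im]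
      field_simp
      nlinarith [Real.sin_sq_add_cos_sq t]
    · simp only [Complex.sub_re, Complex.one_re, Complex.add_re, Complex.mul_re,
        Complex.ofReal_re, Complex.ofReal_im, Complex.I_re, Complex.I_im, Complex.neg_re,
        Complex.neg_im, Complex.mul_im, Complex.add_im, Complex.sub_im, Complex.one_im]
      field_simp
      ring
  have harg : (((1:ℂ) - w)/(1 + w)).im ≠ 0 := by
    rw [hu]; simp; positivity
  have hcontPhi : ContinuousAt Phi w := by
    have h1 : ContinuousAt (fun z : ℂ => ((1:ℂ) - z)/(1 + z)) w :=
      ContinuousAt.div (by fun_prop) (by fun_prop) hden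
    have h3 : ContinuousAt (fun z : ℂ => Complex.log (((1:ℂ) - z)/(1 + z))) w :=
      h1.clog (Complex.mem_slitPlane_iff.mpr (Or.inr harg))
    exact (continuousAt_const.mul h3 : _)
  -- limit of tsum along radial path
  have hsq : Tendsto (fun ρ : ℝ => Real.sqrt ρ) (nhdsWithin 1 (Set.Iio 1)) (nhds 1) := by
    have h := Real.continuous_sqrt.tendsto 1
    rw [Real.sqrt_one] at h
    exact h.mono_left nhdsWithin_le_nhds
  have hcast : Tendsto (fun ρ : ℝ => ((Real.sqrt ρ : ℝ) : ℂ)) (nhdsWithin 1 (Set.Iio 1))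
      (nhds 1) := by
    have h := (Complex.continuous_ofReal.tendsto 1).comp hsq
    rw [Complex.ofReal_one] at h
    exact h
  have hz0 : Tendsto (fun ρ : ℝ => ((Real.sqrt ρ : ℝ) : ℂ) * w) (nhdsWithin 1 (Set.Iio 1))
      (nhds w) := by
    have h := hcast.mul_const w
    simpa using h
  have hH : Tendsto (fun ρ : ℝ => (((Real.sqrt ρ : ℝ) : ℂ))⁻¹ * Phi (((Real.sqrt ρ : ℝ) : ℂ) * w))
      (nhdsWithin 1 (Set.Iio 1)) (nhds (Phi w)) := by
    have h1 := hcontPhi.tendsto.comp hz0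
    have h2 := hcast.inv₀ one_ne_zero
    have h3 := h2.mul h1
    simpa using h3
  have hmem : Set.Ioo (0:ℝ) 1 ∈ nhdsWithin (1:ℝ) (Set.Iio 1) :=
    Ioo_mem_nhdsLT_of_mem (by constructor <;> norm_num)
  have hEq : (fun ρ : ℝ => (((Real.sqrt ρ : ℝ) : ℂ))⁻¹ * Phi (((Real.sqrt ρ : ℝ) : ℂ) * w))
      =ᶠ[nhdsWithin (1:ℝ) (Set.Iio 1)] ((fun z : ℂ => ∑' n, F n * z ^ n) ∘ Complex.ofReal) := by
    filter_upwards [hmem] with ρ hρ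
    obtain ⟨hρ0, hρ1⟩ := hρ
    set σ := Real.sqrt ρ with hσdef
    have hσ0 : 0 < σ := Real.sqrt_pos.mpr hρ0
    have hσ1 : σ < 1 := by
      have h := Real.sqrt_lt_sqrt hρ0.le hρ1
      rwa [Real.sqrt_one] at h
    have hσ2 : σ^2 = ρ := Real.sq_sqrt hρ0.le
    have hσc : ((σ:ℝ):ℂ) ≠ 0 := by exact_mod_cast hσ0.ne'
    have hnz : ‖((σ:ℝ):ℂ) * w‖ < 1 := by
      rw [norm_mul, hnw, mul_one, Complex.norm_real, Real.norm_eq_abs, abs_of_pos hσ0]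
      exact hσ1
    have hs2 := (hasSum_oddSeries hnz).mul_left (((σ:ℝ):ℂ))⁻¹
    have hterm : (fun k : ℕ => (((σ:ℝ):ℂ))⁻¹ * ((((σ:ℝ):ℂ)*w)^(2*k+1)/((2*k+1:ℕ):ℂ)))
        = fun k : ℕ => F k * ((ρ:ℝ):ℂ)^k := by
      funext k
      have e : (((σ:ℝ):ℂ)*w)^(2*k+1) = ((σ:ℝ):ℂ) * ((ρ:ℝ):ℂ)^k * w^(2*k+1) := by
        rw [mul_pow, pow_add, pow_mul, pow_one,
          show ((σ:ℝ):ℂ)^2 = ((ρ:ℝ):ℂ) by rw [← hσ2]; push_cast; ring]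
        ring
      rw [e, hFdef]
      dsimp only
      rw [Complex.real_smul, hcdef]
      dsimp only
      push_cast
      field_simp [hσc]
    rw [hterm] at hs2
    exact (hs2.tsum_eq).symm
  have hB := hH.congr' hEq
  have hlv : l = Phi w := tendsto_nhds_unique hA hB
  -- imaginary part of Phi w
  have him : (Phi w).im = Real.pi/4 := by
    rw [show Phi w = -(1/2:ℂ) * Complex.log (((r:ℝ):ℂ) * (-Complex.I)) by rw [Phi, hu]]
    rw [Complex.mul_im]
    simp only [Complex.neg_im, Complex.neg_re, Complex.one_re, Complex.one_im]
    rw [Complex.log_im, Complex.arg_real_mul _ hr, Complex.arg_neg_I]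
    norm_num
    ring
  -- conclude
  have hIm := (Complex.continuous_im.tendsto l).comp hl
  have hpow : ∀ n : ℕ, w ^ n = Complex.exp (((n*t : ℝ)) * Complex.I) := by
    intro n
    rw [hw, ← Complex.exp_nat_mul]
    congr 1
    push_cast
    ring
  have hfinal : (fun N : ℕ => ∑ k ∈ range N, Real.sin ((2*(k:ℝ)+1)*t)/(2*(k:ℝ)+1))
      = fun N : ℕ => (∑ i ∈ range N, F i).im := by
    funext N
    rw [Complex.im_sum]
    congr 1; funext k
    rw [hFdef]
    dsimp only
    rw [Complex.smul_im, hpow, Complex.exp_ofReal_mul_I_im, hcdef]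
    dsimp only
    push_cast [smul_eq_mul]
    ring
  rw [hfinal]
  have : l.im = Real.pi/4 := by rw [hlv, him]
  rw [← this]
  exact hIm

lemma tendsto_sgnSeries {t : ℝ} (h1 : -Real.pi < t) (h2 : t < Real.pi) (h0 : t ≠ 0) :
    Tendsto (fun N : ℕ => ∑ k ∈ range N, 2/(Real.pi*(2*(k:ℝ)+1)) * Real.sin ((2*(k:ℝ)+1)*t))
      atTop (nhds (if 0 < t then 1/2 else -(1/2))) := by
  have hpi := Real.pi_pos
  rcases lt_or_gt_of_ne h0 with hneg | hpos
  · -- t < 0 : use -t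
    have hmain := tendsto_sinSeries (t := -t) (by linarith) (by linarith)
    have h3 := hmain.const_mul (-(2/Real.pi))
    rw [if_neg (by linarith)]
    have heq : (fun N : ℕ => -(2/Real.pi) * ∑ k ∈ range N, Real.sin ((2*(k:ℝ)+1)*(-t))/(2*(k:ℝ)+1))
        = fun N : ℕ => ∑ k ∈ range N, 2/(Real.pi*(2*(k:ℝ)+1)) * Real.sin ((2*(k:ℝ)+1)*t) := by
      funext N
      rw [Finset.mul_sum]
      congr 1; funext k
      rw [show (2*(k:ℝ)+1)*(-t) = -((2*(k:ℝ)+1)*t) by ring, Real.sin_neg]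
      have : (2*(k:ℝ)+1) ≠ 0 := by positivity
      field_simp
    rw [heq] at h3
    convert h3 using 2
    field_simp
    linarith
  · have hmain := tendsto_sinSeries (t := t) hpos h2
    have h3 := hmain.const_mul (2/Real.pi)
    rw [if_pos hpos]
    have heq : (fun N : ℕ => (2/Real.pi) * ∑ k ∈ range N, Real.sin ((2*(k:ℝ)+1)*t)/(2*(k:ℝ)+1))
        = fun N : ℕ => ∑ k ∈ range N, 2/(Real.pi*(2*(k:ℝ)+1)) * Real.sin ((2*(k:ℝ)+1)*t) := by
      funext N
      rw [Finset.mul_sum]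
      congr 1; funext k
      have : (2*(k:ℝ)+1) ≠ 0 := by positivity
      field_simp
    rw [heq] at h3
    convert h3 using 2
    field_simp
    norm_num

lemma tendsto_of_even_of_odd {u : ℕ → ℝ} {L : ℝ}
    (he : Tendsto (fun n => u (2*n)) atTop (nhds L))
    (ho : Tendsto (fun n => u (2*n+1)) atTop (nhds L)) :
    Tendsto u atTop (nhds L) := by
  rw [Metric.tendsto_atTop] at he ho ⊢
  intro ε hε
  obtain ⟨N₁, hN₁⟩ := he ε hε
  obtain ⟨N₂, hN₂⟩ := ho ε hε
  refine ⟨2*(N₁+N₂)+2, fun n hn => ?_⟩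
  rcases Nat.even_or_odd n with ⟨k, hk⟩ | ⟨k, hk⟩
  · have h := hN₁ k (by omega)
    rwa [show n = 2*k by omega]
  · have h := hN₂ k (by omega)
    rwa [show n = 2*k+1 by omega]
lemma cfun_odd (k : ℕ) (x : ℝ) : cfun (2*k+1) x = Real.cos ((2*(k:ℝ)+1)*x) := by
  rw [cfun, if_neg (by omega), if_pos (by omega)]
  norm_num

lemma cfun_even (k : ℕ) (x : ℝ) : cfun (2*k+2) x = Real.sin ((2*(k:ℝ)+1)*x) := by
  rw [cfun, if_neg (by omega), if_neg (by omega)]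
  push_cast
  ring_nf

lemma gfun_odd (k : ℕ) (a b : ℝ) : gfun (2*k+1) a b =
    (2 / (Real.pi * (2*(k:ℝ)+1))) *
      ((if b < 1 then (1 : ℝ) else 0) * Real.sin ((2*(k:ℝ)+1) * b) -
        (if 0 < a then (1 : ℝ) else 0) * Real.sin ((2*(k:ℝ)+1) * a)) := by
  rw [gfun, if_neg (by omega), if_pos (by omega)]
  norm_num

lemma gfun_even (k : ℕ) (a b : ℝ) : gfun (2*k+2) a b =
    (2 / (Real.pi * (2*(k:ℝ)+1))) *
      ((if 0 < a then (1 : ℝ) else 0) * Real.cos ((2*(k:ℝ)+1) * a) -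
        (if b < 1 then (1 : ℝ) else 0) * Real.cos ((2*(k:ℝ)+1) * b)) := by
  rw [gfun, if_neg (by omega), if_neg (by omega)]
  push_cast
  ring_nf

lemma sum_pair (a b x : ℝ) (J : ℕ) :
    ∑ j ∈ range (2*J+1), cfun j x * gfun j a b = gfun 0 a b +
      ∑ k ∈ range J,
        ((if b < 1 then (1:ℝ) else 0) * (2/(Real.pi*(2*(k:ℝ)+1)) * Real.sin ((2*(k:ℝ)+1)*(b-x)))
        + (if 0 < a then (1:ℝ) else 0) * (2/(Real.pi*(2*(k:ℝ)+1)) * Real.sin ((2*(k:ℝ)+1)*(x-a)))) := by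
  induction J with
  | zero => simp [cfun]
  | succ J ih =>
    rw [show 2*(J+1)+1 = (2*J+1)+1+1 by ring, Finset.sum_range_succ, Finset.sum_range_succ, ih,
      Finset.sum_range_succ, show (2*J+1)+1 = 2*J+2 by ring]
    rw [cfun_odd, cfun_even, gfun_odd, gfun_even]
    rw [show (2*(J:ℝ)+1)*(b-x) = (2*(J:ℝ)+1)*b - (2*(J:ℝ)+1)*x by ring,
      show (2*(J:ℝ)+1)*(x-a) = (2*(J:ℝ)+1)*x - (2*(J:ℝ)+1)*a by ring,
      Real.sin_sub, Real.sin_sub]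
    ring

/-- for x in P_{(a,b)} = (0,1) \ ({a} if a>0 ∪ {b} if b<1), the partial sums
Σ_{j=0}^{N} c_j(x)·g_j(a,b) converge to 𝟙(a < x < b). -/
theorem indicator_expansion (a b : ℝ) (ha : 0 ≤ a) (ha1 : a < 1) (hb : 0 < b) (hb1 : b ≤ 1)
    (hab : a < b) (x : ℝ) (hx : x ∈ Set.Ioo (0 : ℝ) 1)
    (hxa : 0 < a → x ≠ a) (hxb : b < 1 → x ≠ b) :
    Filter.Tendsto (fun N : ℕ => ∑ j ∈ Finset.range (N + 1), cfun j x * gfun j a b)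
      Filter.atTop (nhds (indIoo a b x)) := by
  obtain ⟨hx0, hx1⟩ := hx
  have hpi3 : (3:ℝ) < Real.pi := by have := Real.pi_gt_three; linarith
  set A : ℝ := if 0 < a then (1:ℝ) else 0 with hA
  set B : ℝ := if b < 1 then (1:ℝ) else 0 with hB
  set sb : ℝ := if 0 < b - x then 1/2 else -(1/2) with hsbdef
  set sa : ℝ := if 0 < x - a then 1/2 else -(1/2) with hsadef
  -- the two raw series converge
  have htb0 : b - x ≠ 0 := by
    by_cases hbc : b < 1
    · exact sub_ne_zero.mpr fun hh => (hxb hbc) hh.symm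
    · have : b = 1 := le_antisymm hb1 (not_lt.mp hbc)
      rw [this]; intro hh; linarith [sub_eq_zero.mp hh]
  have hta0 : x - a ≠ 0 := by
    by_cases hac : 0 < a
    · exact sub_ne_zero.mpr (hxa hac)
    · have : a = 0 := le_antisymm (not_lt.mp hac) ha
      rw [this]; intro hh; linarith [sub_eq_zero.mp hh]
  have hsb := tendsto_sgnSeries (t := b-x) (by linarith) (by linarith) htb0
  have hsa := tendsto_sgnSeries (t := x-a) (by linarith) (by linarith) hta0
  have hVb := hsb.const_mul B
  have hVa := hsa.const_mul A
  -- even partial sums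
  have heven : Tendsto (fun J : ℕ => ∑ j ∈ range (2*J+1), cfun j x * gfun j a b) atTop
      (nhds (gfun 0 a b + (B * sb + A * sa))) := by
    have h := (tendsto_const_nhds (x := gfun 0 a b)).add (hVb.add hVa)
    refine h.congr fun J => ?_
    rw [sum_pair]
    congr 1
    rw [Finset.mul_sum, Finset.mul_sum, ← Finset.sum_add_distrib]
  -- the limit equals the indicator
  have hval : gfun 0 a b + (B * sb + A * sa) = indIoo a b x := by
    have ha0 : ¬ 0 < a → a = 0 := fun h => le_antisymm (not_lt.mp h) ha
    have hb0 : ¬ b < 1 → b = 1 := fun h => le_antisymm hb1 (not_lt.mp h)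
    rw [gfun, if_pos rfl, indIoo, hsbdef, hsadef, hA, hB]
    by_cases hac : 0 < a <;> by_cases hbc : b < 1
    · rcases lt_or_gt_of_ne (hxa hac) with h1 | h1
      · rw [if_pos hac, if_pos hbc, if_neg (show ¬(a < x ∧ x < b) from fun hh => absurd hh.1 (not_lt.mpr h1.le)),
          if_pos (show (0:ℝ) < b - x by linarith),
          if_neg (not_lt.mpr (show x - a ≤ 0 by linarith))]
        norm_num
      · rcases lt_or_gt_of_ne (hxb hbc) with h2 | h2
        · rw [if_pos hac, if_pos hbc, if_pos (show a < x ∧ x < b from ⟨h1, h2⟩),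
            if_pos (show (0:ℝ) < b - x by linarith),
            if_pos (show (0:ℝ) < x - a by linarith)]
          norm_num
        · rw [if_pos hac, if_pos hbc, if_neg (show ¬(a < x ∧ x < b) from fun hh => absurd hh.2 (not_lt.mpr h2.le)),
            if_neg (not_lt.mpr (show b - x ≤ 0 by linarith)),
            if_pos (show (0:ℝ) < x - a by linarith)]
          norm_num
    · have hb1' : b = 1 := hb0 hbc
      rcases lt_or_gt_of_ne (hxa hac) with h1 | h1
      · rw [if_pos hac, if_neg hbc, if_neg (show ¬(a < x ∧ x < b) from fun hh => absurd hh.1 (not_lt.mpr h1.le)),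
          if_neg (not_lt.mpr (show x - a ≤ 0 by linarith))]
        norm_num
      · rw [if_pos hac, if_neg hbc, if_pos (show a < x ∧ x < b from ⟨h1, show x < b by rw [hb1']; exact hx1⟩),
          if_pos (show (0:ℝ) < x - a by linarith)]
        norm_num
    · have ha' : a = 0 := ha0 hac
      rcases lt_or_gt_of_ne (hxb hbc) with h2 | h2
      · rw [if_neg hac, if_pos hbc, if_pos (show a < x ∧ x < b from ⟨show a < x by rw [ha']; exact hx0, h2⟩),
          if_pos (show (0:ℝ) < b - x by linarith)]
        norm_num
      · rw [if_neg hac, if_pos hbc, if_neg (show ¬(a < x ∧ x < b) from fun hh => absurd hh.2 (not_lt.mpr h2.le)),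
          if_neg (not_lt.mpr (show b - x ≤ 0 by linarith))]
        norm_num
    · have ha' : a = 0 := ha0 hac
      have hb1' : b = 1 := hb0 hbc
      rw [if_neg hac, if_neg hbc,
        if_pos (show a < x ∧ x < b from ⟨show a < x by rw [ha']; exact hx0, show x < b by rw [hb1']; exact hx1⟩)]
      norm_num
  -- tail terms tend to 0
  have htail : Tendsto (fun J : ℕ => cfun (2*J+1) x * gfun (2*J+1) a b) atTop (nhds 0) := by
    apply squeeze_zero_norm (a := fun J : ℕ => 4/(Real.pi*(2*(J:ℝ)+1)))
    · intro J
      rw [cfun_odd, gfun_odd, ← hA, ← hB]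
      have hm : (0:ℝ) < Real.pi * (2*(J:ℝ)+1) := by positivity
      have habs : ∀ y : ℝ, |Real.sin y| ≤ 1 :=
        fun y => abs_le.mpr ⟨Real.neg_one_le_sin y, Real.sin_le_one y⟩
      have hBa : |B| ≤ 1 := by rw [hB]; split_ifs <;> norm_num
      have hAa : |A| ≤ 1 := by rw [hA]; split_ifs <;> norm_num
      have h3 : |B * Real.sin ((2*(J:ℝ)+1)*b) - A * Real.sin ((2*(J:ℝ)+1)*a)| ≤ 2 := by
        calc |B * Real.sin ((2*(J:ℝ)+1)*b) - A * Real.sin ((2*(J:ℝ)+1)*a)|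
            ≤ |B * Real.sin ((2*(J:ℝ)+1)*b)| + |A * Real.sin ((2*(J:ℝ)+1)*a)| := abs_sub _ _
          _ ≤ 1*1 + 1*1 := by
              rw [abs_mul, abs_mul]
              gcongr <;> first | exact hBa | exact hAa | exact habs _ |
                exact abs_nonneg _ | norm_num
          _ = 2 := by norm_num
      rw [Real.norm_eq_abs, abs_mul, abs_mul, abs_of_pos (show (0:ℝ) < 2/(Real.pi*(2*(J:ℝ)+1))
        by positivity)]
      calc |Real.cos ((2*(J:ℝ)+1)*x)| * (2/(Real.pi*(2*(J:ℝ)+1)) *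
            |B * Real.sin ((2*(J:ℝ)+1)*b) - A * Real.sin ((2*(J:ℝ)+1)*a)|)
          ≤ 1 * (2/(Real.pi*(2*(J:ℝ)+1)) * 2) := by
            gcongr <;> first | exact Real.abs_cos_le_one _ | exact h3 | positivity
        _ = 4/(Real.pi*(2*(J:ℝ)+1)) := by ring
    · have h1 : Tendsto (fun J : ℕ => (Real.pi*(2*(J:ℝ)+1))⁻¹) atTop (nhds 0) := by
        apply tendsto_inv_atTop_zero.comp
        apply Tendsto.const_mul_atTop Real.pi_pos
        apply tendsto_atTop_add_const_right
        exact (tendsto_natCast_atTop_atTop (R := ℝ)).const_mul_atTop two_pos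
      have h2 := h1.const_mul (4:ℝ)
      simpa [div_eq_mul_inv] using h2
  -- odd partial sums
  have hodd : Tendsto (fun J : ℕ => ∑ j ∈ range (2*J+1+1), cfun j x * gfun j a b) atTop
      (nhds (gfun 0 a b + (B * sb + A * sa))) := by
    have h := heven.add htail
    rw [add_zero] at h
    refine h.congr fun J => ?_
    conv_rhs => rw [Finset.sum_range_succ]
  rw [← hval]
  exact tendsto_of_even_of_odd (u := fun N : ℕ => ∑ j ∈ range (N+1), cfun j x * gfun j a b)
    (by exact heven) (by exact hodd)
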